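/- Duality between hockey-stick dominance and trade-off dominance: let μ, ν be probability measures on a measurable space Ω and P, Q probability measures on a measurable space Ω'. The following are equivalent: (i) H_α(μ‖ν) ≤ H_α(P‖Q) for all α ≥ 0; (ii) H_α(ν‖μ) ≤ H_α(Q‖P) for all α ≥ 0; (iii) T[μ,ν](x) ≥ T[P,Q](x) for all x ∈ [0,1]. -/

import Mathlib

open MeasureTheory

/-- The hockey-stick divergence `H_α(P‖Q) = ∫ (p − α·q)₊ dμ` with `μ = P + Q`. -/
noncomputable def hockeyStick {Ω : Type*} [MeasurableSpace Ω] (α : ℝ) (P Q : Measure Ω) : ℝ :=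
  ∫ ω, max ((P.rnDeriv (P + Q) ω).toReal - α * (Q.rnDeriv (P + Q) ω).toReal) 0 ∂(P + Q)

/-- The trade-off function `T[P,Q](α) = inf {∫ (1−φ) dQ : φ : Ω → [0,1] measurable, ∫ φ dP ≤ α}`. -/
noncomputable def tradeOff {Ω : Type*} [MeasurableSpace Ω] (P Q : Measure Ω) (α : ℝ) : ℝ :=
  sInf {r : ℝ | ∃ φ : Ω → ℝ, Measurable φ ∧ (∀ ω, φ ω ∈ Set.Icc (0:ℝ) 1) ∧
    (∫ ω, φ ω ∂P) ≤ α ∧ r = ∫ ω, (1 - φ ω) ∂Q}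

namespace HSDualAux

open Filter Topology

variable {Ω : Type*} [MeasurableSpace Ω]

/-- density helper -/
noncomputable def d (P R : Measure Ω) (ω : Ω) : ℝ := (P.rnDeriv R ω).toReal

lemma d_meas (P R : Measure Ω) : Measurable (d P R) :=
  (Measure.measurable_rnDeriv P R).ennreal_toReal

lemma d_nonneg (P R : Measure Ω) (ω : Ω) : 0 ≤ d P R ω := ENNReal.toReal_nonneg

section PQ

variable (P Q : Measure Ω) [IsProbabilityMeasure P] [IsProbabilityMeasure Q]

lemma acP : P ≪ P + Q := Measure.absolutelyContinuous_of_le (Measure.le_add_right le_rfl)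

lemma acQ : Q ≪ P + Q := by
  rw [add_comm P Q]
  exact Measure.absolutelyContinuous_of_le (Measure.le_add_right le_rfl)

lemma d_int_P : Integrable (d P (P + Q)) (P + Q) := Measure.integrable_toReal_rnDeriv

lemma d_int_Q : Integrable (d Q (P + Q)) (P + Q) := Measure.integrable_toReal_rnDeriv

lemma integral_d_P : ∫ ω, d P (P + Q) ω ∂(P + Q) = 1 := by
  have h := Measure.integral_toReal_rnDeriv (acP P Q)
  simp only [measure_univ, ENNReal.toReal_one, probReal_univ] at h
  exact h

lemma integral_d_Q : ∫ ω, d Q (P + Q) ω ∂(P + Q) = 1 := by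
  have h := Measure.integral_toReal_rnDeriv (acQ P Q)
  simp only [measure_univ, ENNReal.toReal_one, probReal_univ] at h
  exact h

lemma setIntegral_d_P (s : Set Ω) : ∫ ω in s, d P (P + Q) ω ∂(P + Q) = (P s).toReal :=
  Measure.setIntegral_toReal_rnDeriv (acP P Q) s

lemma setIntegral_d_Q (s : Set Ω) : ∫ ω in s, d Q (P + Q) ω ∂(P + Q) = (Q s).toReal :=
  Measure.setIntegral_toReal_rnDeriv (acQ P Q) s

lemma integral_dmul_P (φ : Ω → ℝ) :
    ∫ ω, φ ω ∂P = ∫ ω, d P (P + Q) ω * φ ω ∂(P + Q) := by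
  rw [← integral_rnDeriv_smul (acP P Q)]; rfl

lemma integral_dmul_Q (φ : Ω → ℝ) :
    ∫ ω, φ ω ∂Q = ∫ ω, d Q (P + Q) ω * φ ω ∂(P + Q) := by
  rw [← integral_rnDeriv_smul (acQ P Q)]; rfl

lemma hs_def (α : ℝ) :
    hockeyStick α P Q = ∫ ω, max (d P (P + Q) ω - α * d Q (P + Q) ω) 0 ∂(P + Q) := rfl

end PQ

lemma test_int (R : Measure Ω) [IsFiniteMeasure R] (φ : Ω → ℝ) (hm : Measurable φ)
    (h01 : ∀ ω, φ ω ∈ Set.Icc (0:ℝ) 1) : Integrable φ R :=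
  (integrable_const (1:ℝ)).mono' hm.aestronglyMeasurable (ae_of_all _ fun ω => by
    rw [Real.norm_eq_abs, abs_of_nonneg (h01 ω).1]; exact (h01 ω).2)

lemma int_mul_test (R : Measure Ω) (f : Ω → ℝ) (hf : Integrable f R) (φ : Ω → ℝ)
    (hm : Measurable φ) (h01 : ∀ ω, φ ω ∈ Set.Icc (0:ℝ) 1) :
    Integrable (fun ω => f ω * φ ω) R := by
  have := Integrable.bdd_mul hf hm.aestronglyMeasurable
    (c := 1) (ae_of_all _ fun ω => by rw [Real.norm_eq_abs, abs_of_nonneg (h01 ω).1]; exact (h01 ω).2)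
  simpa [mul_comm] using this

lemma integral_ind (R : Measure Ω) (s : Set Ω) (hs : MeasurableSet s) :
    ∫ ω, s.indicator (fun _ => (1:ℝ)) ω ∂ R = (R s).toReal := by
  rw [integral_indicator hs, setIntegral_const, smul_eq_mul, mul_one, measureReal_def]

section PQ2

variable (P Q : Measure Ω) [IsProbabilityMeasure P] [IsProbabilityMeasure Q]

lemma hs_int (α : ℝ) :
    Integrable (fun ω => max (d P (P + Q) ω - α * d Q (P + Q) ω) 0) (P + Q) :=
  ((d_int_P P Q).sub ((d_int_Q P Q).const_mul α)).pos_part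

lemma hs_eq_set (α : ℝ) :
    hockeyStick α P Q
      = (P {ω | α * d Q (P + Q) ω < d P (P + Q) ω}).toReal
        - α * (Q {ω | α * d Q (P + Q) ω < d P (P + Q) ω}).toReal := by
  set A := {ω | α * d Q (P + Q) ω < d P (P + Q) ω} with hA
  have hAm : MeasurableSet A :=
    measurableSet_lt (measurable_const.mul (d_meas Q (P + Q))) (d_meas P (P + Q))
  have h1 : ∀ ω, max (d P (P + Q) ω - α * d Q (P + Q) ω) 0
      = A.indicator (fun ω => d P (P + Q) ω - α * d Q (P + Q) ω) ω := by
    intro ω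
    by_cases h : ω ∈ A
    · rw [Set.indicator_of_mem h]
      have : α * d Q (P + Q) ω < d P (P + Q) ω := h
      exact max_eq_left (by linarith)
    · rw [Set.indicator_of_notMem h]
      have : ¬ (α * d Q (P + Q) ω < d P (P + Q) ω) := h
      exact max_eq_right (by push_neg at this; linarith)
  have i1 : IntegrableOn (fun ω => d P (P + Q) ω) A (P + Q) := (d_int_P P Q).integrableOn
  have i2 : IntegrableOn (fun ω => α * d Q (P + Q) ω) A (P + Q) :=
    ((d_int_Q P Q).const_mul α).integrableOn
  rw [hs_def, integral_congr_ae (ae_of_all _ h1), integral_indicator hAm,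
    integral_sub i1 i2, setIntegral_d_P, integral_const_mul, setIntegral_d_Q]

lemma hs_zero : hockeyStick 0 P Q = 1 := by
  rw [hs_def]
  have h1 : ∀ ω, max (d P (P + Q) ω - 0 * d Q (P + Q) ω) 0 = d P (P + Q) ω := fun ω => by
    rw [zero_mul, sub_zero]; exact max_eq_left (d_nonneg P (P + Q) ω)
  rw [integral_congr_ae (ae_of_all _ h1), integral_d_P]

lemma hs_symm (α : ℝ) (hα : 0 < α) :
    hockeyStick α P Q = 1 - α + α * hockeyStick (1/α) Q P := by
  have hflip : hockeyStick (1/α) Q P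
      = ∫ ω, max (d Q (P + Q) ω - (1/α) * d P (P + Q) ω) 0 ∂(P + Q) := by
    rw [show (P + Q) = (Q + P) from add_comm P Q]; rfl
  have key : ∀ ω, max (d P (P + Q) ω - α * d Q (P + Q) ω) 0
      = (d P (P + Q) ω - α * d Q (P + Q) ω)
        + α * max (d Q (P + Q) ω - (1/α) * d P (P + Q) ω) 0 := by
    intro ω
    have h1 : α * max (d Q (P + Q) ω - (1/α) * d P (P + Q) ω) 0
        = max (α * d Q (P + Q) ω - d P (P + Q) ω) 0 := by
      rw [mul_max_of_nonneg _ _ hα.le, mul_zero, mul_sub, ← mul_assoc,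
        mul_one_div_cancel hα.ne', one_mul]
    rw [h1]
    have h2 := max_zero_sub_max_neg_zero_eq_self (d P (P + Q) ω - α * d Q (P + Q) ω)
    rw [neg_sub] at h2
    linarith
  have i1 : Integrable (fun ω => d P (P + Q) ω - α * d Q (P + Q) ω) (P + Q) :=
    (d_int_P P Q).sub ((d_int_Q P Q).const_mul α)
  have i2 : Integrable (fun ω => α * max (d Q (P + Q) ω - (1/α) * d P (P + Q) ω) 0) (P + Q) :=
    (((d_int_Q P Q).sub ((d_int_P P Q).const_mul (1/α))).pos_part).const_mul α
  rw [hs_def, integral_congr_ae (ae_of_all _ key), integral_add i1 i2,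
    integral_sub (d_int_P P Q) ((d_int_Q P Q).const_mul α),
    integral_const_mul, integral_const_mul, integral_d_P, integral_d_Q, hflip]
  ring

lemma tradeOff_nonneg (x : ℝ) : 0 ≤ tradeOff P Q x := by
  apply Real.sInf_nonneg
  rintro r ⟨φ, hm, h01, hx, rfl⟩
  refine integral_nonneg fun ω => ?_
  simp only [Pi.zero_apply]
  linarith [(h01 ω).2]

lemma tradeOff_le (x : ℝ) (φ : Ω → ℝ) (hm : Measurable φ)
    (h01 : ∀ ω, φ ω ∈ Set.Icc (0:ℝ) 1) (hx : ∫ ω, φ ω ∂P ≤ x) :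
    tradeOff P Q x ≤ ∫ ω, (1 - φ ω) ∂Q := by
  apply csInf_le
  · refine ⟨0, ?_⟩
    rintro r ⟨ψ, hm', h01', hx', rfl⟩
    refine integral_nonneg fun ω => ?_
    simp only [Pi.zero_apply]
    linarith [(h01' ω).2]
  · exact ⟨φ, hm, h01, hx, rfl⟩

lemma tradeOff_le_indicator (s : Set Ω) (hs : MeasurableSet s) (x : ℝ)
    (hx : (P s).toReal ≤ x) : tradeOff P Q x ≤ 1 - (Q s).toReal := by
  have h01 : ∀ ω, s.indicator (fun _ => (1:ℝ)) ω ∈ Set.Icc (0:ℝ) 1 := by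
    intro ω
    by_cases h : ω ∈ s <;>
      simp [Set.indicator_of_mem, Set.indicator_of_notMem, h]
  have h := tradeOff_le P Q x (s.indicator fun _ => 1) (measurable_const.indicator hs) h01
    (by rw [integral_ind P s hs]; exact hx)
  calc tradeOff P Q x ≤ ∫ ω, (1 - s.indicator (fun _ => (1:ℝ)) ω) ∂Q := h
    _ = 1 - (Q s).toReal := by
        rw [integral_sub (integrable_const 1) ((integrable_const 1).indicator hs),
          integral_const, integral_ind Q s hs]
        simp

/-- weak duality -/
lemma le_tradeOff (α x : ℝ) (hα : 0 ≤ α) (hx : 0 ≤ x) :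
    1 - α * x - hockeyStick α P Q ≤ tradeOff Q P x := by
  apply le_csInf
  · refine ⟨∫ ω, (1 - min x 1) ∂P, fun _ => min x 1, measurable_const,
      fun ω => ⟨le_min hx zero_le_one, min_le_right x 1⟩, ?_, rfl⟩
    rw [integral_const]; simp [min_le_left x 1]
  · rintro r ⟨φ, hm, h01, hφx, rfl⟩
    have e1 : ∫ ω, (1 - φ ω) ∂P = 1 - ∫ ω, φ ω ∂P := by
      rw [integral_sub (integrable_const 1) (test_int P φ hm h01)]; simp
    have e2 : ∫ ω, φ ω ∂P = ∫ ω, d P (P + Q) ω * φ ω ∂(P + Q) := integral_dmul_P P Q φ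
    have i1 : Integrable (fun ω => (d P (P + Q) ω - α * d Q (P + Q) ω) * φ ω) (P + Q) :=
      int_mul_test (P + Q) _ ((d_int_P P Q).sub ((d_int_Q P Q).const_mul α)) φ hm h01
    have i2 : Integrable (fun ω => d Q (P + Q) ω * φ ω) (P + Q) :=
      int_mul_test (P + Q) _ (d_int_Q P Q) φ hm h01
    have e3 : ∫ ω, d P (P + Q) ω * φ ω ∂(P + Q)
        = (∫ ω, (d P (P + Q) ω - α * d Q (P + Q) ω) * φ ω ∂(P + Q))
          + α * ∫ ω, d Q (P + Q) ω * φ ω ∂(P + Q) := by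
      rw [← integral_const_mul, ← integral_add i1 (i2.const_mul α)]
      congr 1; funext ω; ring
    have e4 : ∫ ω, (d P (P + Q) ω - α * d Q (P + Q) ω) * φ ω ∂(P + Q) ≤ hockeyStick α P Q := by
      rw [hs_def]
      apply integral_mono i1 (hs_int P Q α)
      intro ω
      dsimp only
      have hφ1 := (h01 ω).1
      have hφ2 := (h01 ω).2
      have hm1 := le_max_left (d P (P + Q) ω - α * d Q (P + Q) ω) 0
      have hm2 := le_max_right (d P (P + Q) ω - α * d Q (P + Q) ω) 0
      nlinarith [mul_nonneg hm2 (sub_nonneg.mpr hφ2),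
        mul_nonneg (sub_nonneg.mpr hm1) hφ1]
    have e5 : ∫ ω, d Q (P + Q) ω * φ ω ∂(P + Q) ≤ x := by
      rw [← integral_dmul_Q P Q φ]; exact hφx
    have e6 : α * ∫ ω, d Q (P + Q) ω * φ ω ∂(P + Q) ≤ α * x := by
      exact mul_le_mul_of_nonneg_left e5 hα
    linarith

/-- Neyman–Pearson achievability -/
lemma np (x : ℝ) (hx0 : 0 ≤ x) (hx1 : x ≤ 1) (t : ℝ) (ht0 : 0 ≤ t)
    (ht : ∀ α : ℝ, 0 ≤ α → 1 - α * x - hockeyStick α P Q ≤ t) :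
    tradeOff Q P x ≤ t := by
  set ρ := P + Q with hρ
  set p := d P ρ with hp
  set q := d Q ρ with hq
  have hpm : Measurable p := d_meas P ρ
  have hqm : Measurable q := d_meas Q ρ
  set A : ℝ → Set Ω := fun β => {ω | β * q ω < p ω} with hAdef
  have hAm : ∀ β, MeasurableSet (A β) := fun β =>
    measurableSet_lt (measurable_const.mul hqm) hpm
  have hAmono : ∀ β β', β ≤ β' → A β' ⊆ A β := by
    intro β β' h ω hω
    have hω' : β' * q ω < p ω := hω
    have : β * q ω ≤ β' * q ω := mul_le_mul_of_nonneg_right h (d_nonneg Q ρ ω)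
    exact lt_of_le_of_lt this hω'
  set g : ℝ → ℝ := fun β => (Q (A β)).toReal with hgdef
  have hgmono : ∀ β β', β ≤ β' → g β' ≤ g β := fun β β' h =>
    ENNReal.toReal_mono (measure_ne_top _ _) (measure_mono (hAmono β β' h))
  by_cases hcase : g 0 ≤ x
  · -- φ = indicator of A 0 works; value is 0
    have hP1 : (P (A 0)).toReal = 1 := by
      have h0 : (P ((A 0)ᶜ)).toReal = 0 := by
        rw [← setIntegral_d_P P Q]
        rw [setIntegral_congr_fun (hAm 0).compl (g := fun _ => (0:ℝ)) ?_, integral_zero]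
        intro ω hω
        have hω' : ¬ (0 * q ω < p ω) := hω
        rw [zero_mul] at hω'
        exact le_antisymm (not_lt.mp hω') (d_nonneg P ρ ω)
      have h0' : P ((A 0)ᶜ) = 0 := by
        rcases (ENNReal.toReal_eq_zero_iff _).mp h0 with h | h
        · exact h
        · exact absurd h (measure_ne_top _ _)
      have := measure_add_measure_compl (μ := P) (hAm 0)
      rw [h0', add_zero, measure_univ] at this
      rw [this]; simp
    have hle := tradeOff_le_indicator Q P (A 0) (hAm 0) x (hcase)
    rw [hP1] at hle
    linarith
  · push_neg at hcase
    have hq0 : Q {ω | q ω ≤ 0} = 0 := by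
      have hsm : MeasurableSet {ω | q ω ≤ 0} := measurableSet_le hqm measurable_const
      have h0 : (Q {ω | q ω ≤ 0}).toReal = 0 := by
        rw [← setIntegral_d_Q P Q]
        rw [setIntegral_congr_fun hsm (g := fun _ => (0:ℝ)) ?_, integral_zero]
        intro ω hω
        exact le_antisymm hω (d_nonneg Q ρ ω)
      rcases (ENNReal.toReal_eq_zero_iff _).mp h0 with h | h
      · exact h
      · exact absurd h (measure_ne_top _ _)
    have hInter : (⋂ n : ℕ, A n) ⊆ {ω | q ω ≤ 0} := by
      intro ω hω
      by_contra hcon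
      simp only [Set.mem_setOf_eq, not_le] at hcon
      obtain ⟨n, hn⟩ := exists_nat_gt (p ω / q ω)
      have h1 : ω ∈ A n := Set.mem_iInter.mp hω n
      have h2 : (n : ℝ) * q ω < p ω := h1
      rw [div_lt_iff₀ hcon] at hn
      linarith
    have htend : Tendsto (fun n : ℕ => g n) atTop (𝓝 0) := by
      have h1 : Tendsto (fun n : ℕ => Q (A n)) atTop (𝓝 (Q (⋂ n : ℕ, A n))) :=
        tendsto_measure_iInter_atTop (fun n => (hAm n).nullMeasurableSet)
          (fun m n h => hAmono _ _ (by exact_mod_cast h)) ⟨0, measure_ne_top _ _⟩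
      have h2 : Q (⋂ n : ℕ, A n) = 0 :=
        measure_mono_null hInter hq0
      rw [h2] at h1
      have h3 := (ENNReal.tendsto_toReal (a := (0 : ENNReal)) (by simp)).comp h1
      simpa [Function.comp_def] using h3
    rcases eq_or_lt_of_le hx0 with hx0' | hxpos
    · -- x = 0 case
      have hsm : MeasurableSet {ω | q ω ≤ 0} := measurableSet_le hqm measurable_const
      have hle := tradeOff_le_indicator Q P {ω | q ω ≤ 0} hsm x
        (by rw [hq0]; simpa using hx0)
      -- show 1 - (P {q ≤ 0}).toReal ≤ t via dominated convergence
      have hHtend : Tendsto (fun n : ℕ => hockeyStick n P Q) atTop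
          (𝓝 ((P {ω | q ω ≤ 0}).toReal)) := by
        have hlim : ∫ ω, ({ω | q ω ≤ 0}.indicator p) ω ∂ρ = (P {ω | q ω ≤ 0}).toReal := by
          rw [integral_indicator hsm, setIntegral_d_P]
        have := tendsto_integral_of_dominated_convergence (μ := ρ)
          (F := fun n : ℕ => fun ω => max (p ω - n * q ω) 0)
          (f := {ω | q ω ≤ 0}.indicator p) (bound := p)
          (fun n => ((hpm.sub (hqm.const_mul _)).max measurable_const).aestronglyMeasurable)
          (d_int_P P Q)
          (fun n => ae_of_all _ fun ω => by
            rw [Real.norm_eq_abs, abs_of_nonneg (le_max_right _ 0)]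
            have h1 : (0:ℝ) ≤ (n : ℝ) * q ω :=
              mul_nonneg (Nat.cast_nonneg n) (d_nonneg Q ρ ω)
            exact max_le (by linarith) (d_nonneg P ρ ω))
          (ae_of_all _ fun ω => by
            by_cases hc : q ω ≤ 0
            · have hq' : q ω = 0 := le_antisymm hc (d_nonneg Q ρ ω)
              have hmem : ω ∈ {ω | q ω ≤ 0} := hc
              have : ∀ n : ℕ, max (p ω - n * q ω) 0 = {ω | q ω ≤ 0}.indicator p ω := by
                intro n
                rw [Set.indicator_of_mem hmem, hq', mul_zero, sub_zero]
                exact max_eq_left (d_nonneg P ρ ω)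
              exact Tendsto.congr (fun n => (this n).symm) tendsto_const_nhds
            · push_neg at hc
              rw [Set.indicator_of_notMem (by simpa using hc.not_ge)]
              have hev : ∀ᶠ n : ℕ in atTop, max (p ω - n * q ω) 0 = 0 := by
                rw [eventually_atTop]
                obtain ⟨N, hN⟩ := exists_nat_gt (p ω / q ω)
                refine ⟨N, fun n hn => max_eq_right ?_⟩
                have h1 : p ω / q ω < (n : ℝ) := lt_of_lt_of_le hN (by exact_mod_cast hn)
                rw [div_lt_iff₀ hc] at h1
                linarith
              exact Tendsto.congr' (hev.mono fun n h => h.symm) tendsto_const_nhds)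
        rw [hlim] at this
        exact this
      have hle2 : 1 - (P {ω | q ω ≤ 0}).toReal ≤ t := by
        have h1 : Tendsto (fun n : ℕ => 1 - hockeyStick n P Q) atTop
            (𝓝 (1 - (P {ω | q ω ≤ 0}).toReal)) := (tendsto_const_nhds.sub hHtend)
        refine le_of_tendsto h1 (Eventually.of_forall fun n => ?_)
        have := ht n (Nat.cast_nonneg n)
        rw [← hx0'] at this
        linarith
      linarith
    · -- 0 < x case
      set S := {β : ℝ | 0 ≤ β ∧ g β ≤ x} with hSdef
      have hSne : S.Nonempty := by
        obtain ⟨n, hn⟩ := (htend.eventually_lt_const hxpos).exists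
        exact ⟨n, Nat.cast_nonneg n, hn.le⟩
      have hSbdd : BddBelow S := ⟨0, fun β hβ => hβ.1⟩
      set α := sInf S with hαdef
      have hα0 : 0 ≤ α := le_csInf hSne fun β hβ => hβ.1
      have hgα : g α ≤ x := by
        have hseq : ∀ n : ℕ, g (α + 1/(n+1)) ≤ x := by
          intro n
          obtain ⟨β, hβS, hβlt⟩ := exists_lt_of_csInf_lt hSne
            (show sInf S < α + 1/(n+1) by
              rw [← hαdef]
              have : (0:ℝ) < 1/((n:ℝ)+1) := by positivity
              linarith)
          exact le_trans (hgmono _ _ hβlt.le) hβS.2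
        have hUnion : (⋃ n : ℕ, A (α + 1/(n+1))) = A α := by
          apply Set.Subset.antisymm
          · exact Set.iUnion_subset fun n => hAmono _ _ (le_add_of_nonneg_right (by positivity))
          · intro ω hω
            have hω' : α * q ω < p ω := hω
            rcases eq_or_lt_of_le (show (0:ℝ) ≤ q ω from d_nonneg Q ρ ω) with hq0' | hqpos
            · refine Set.mem_iUnion.mpr ⟨0, ?_⟩
              show (α + 1/((0:ℕ)+1)) * q ω < p ω
              rw [← hq0', mul_zero]
              rw [← hq0', mul_zero] at hω'
              exact hω'
            · obtain ⟨n, hn⟩ := exists_nat_one_div_lt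
                (div_pos (by linarith : (0:ℝ) < p ω - α * q ω) hqpos)
              refine Set.mem_iUnion.mpr ⟨n, ?_⟩
              show (α + 1/((n:ℝ)+1)) * q ω < p ω
              have h1 : (1/((n:ℝ)+1)) * q ω < ((p ω - α * q ω) / q ω) * q ω :=
                mul_lt_mul_of_pos_right hn hqpos
              rw [div_mul_cancel₀ _ hqpos.ne'] at h1
              nlinarith
        have hmono2 : Monotone (fun n : ℕ => A (α + 1/(n+1))) := by
          intro m n h
          apply hAmono
          have h1 : (1:ℝ)/((n:ℝ)+1) ≤ 1/((m:ℝ)+1) := by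
            apply one_div_le_one_div_of_le (by positivity)
            have : (m:ℝ) ≤ n := by exact_mod_cast h
            linarith
          linarith
        have h1 : Tendsto (fun n : ℕ => Q (A (α + 1/(n+1)))) atTop
            (𝓝 (Q (⋃ n : ℕ, A (α + 1/(n+1))))) := tendsto_measure_iUnion_atTop hmono2
        rw [hUnion] at h1
        have h2 : Tendsto (fun n : ℕ => g (α + 1/(n+1))) atTop (𝓝 (g α)) := by
          have h3 := (ENNReal.tendsto_toReal (measure_ne_top Q (A α))).comp h1
          simpa [Function.comp_def] using h3
        exact le_of_tendsto h2 (Eventually.of_forall hseq)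
      set C := {ω | α * q ω ≤ p ω} with hCdef
      have hCm : MeasurableSet C := measurableSet_le (measurable_const.mul hqm) hpm
      have hcle : x ≤ (Q C).toReal := by
        rcases eq_or_lt_of_le hα0 with hα0' | hαpos
        · have : C = Set.univ := by
            apply Set.eq_univ_of_forall
            intro ω
            show α * q ω ≤ p ω
            rw [← hα0', zero_mul]
            exact d_nonneg P ρ ω
          rw [this]
          simpa using hx1
        · set βs : ℕ → ℝ := fun n => α - α/(n+2) with hβs
          have hβlt : ∀ n, βs n < α := fun n =>
            sub_lt_self α (by positivity)
          have hβ0 : ∀ n, 0 ≤ βs n := by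
            intro n
            have : α/((n:ℝ)+2) ≤ α := by
              apply div_le_self hα0
              have : (0:ℝ) ≤ (n:ℝ) := Nat.cast_nonneg n
              linarith
            simp only [hβs]; linarith
          have hβmono : Monotone βs := by
            intro m n h
            have h1 : α/((n:ℝ)+2) ≤ α/((m:ℝ)+2) := by
              apply div_le_div_of_nonneg_left hα0 (by positivity)
              have : (m:ℝ) ≤ n := by exact_mod_cast h
              linarith
            simp only [hβs]; linarith
          have hβtend : Tendsto βs atTop (𝓝 α) := by
            have h1 : Tendsto (fun n : ℕ => α/((n:ℝ)+2)) atTop (𝓝 0) := by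
              apply Tendsto.const_div_atTop
              exact tendsto_atTop_add_const_right atTop 2 tendsto_natCast_atTop_atTop
            have := tendsto_const_nhds (x := α) (f := atTop (α := ℕ)) |>.sub h1
            simpa using this
          have hsub : (⋂ n : ℕ, A (βs n)) ⊆ C := by
            intro ω hω
            show α * q ω ≤ p ω
            have h1 : ∀ n : ℕ, βs n * q ω ≤ p ω := fun n =>
              le_of_lt (Set.mem_iInter.mp hω n)
            exact le_of_tendsto (hβtend.mul_const (q ω)) (Eventually.of_forall h1)
          have hAnti : Antitone (fun n : ℕ => A (βs n)) := fun m n h =>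
            hAmono _ _ (hβmono h)
          have h1 : Tendsto (fun n : ℕ => Q (A (βs n))) atTop
              (𝓝 (Q (⋂ n : ℕ, A (βs n)))) :=
            tendsto_measure_iInter_atTop (fun n => (hAm _).nullMeasurableSet) hAnti
              ⟨0, measure_ne_top _ _⟩
          have h2 : Tendsto (fun n : ℕ => g (βs n)) atTop
              (𝓝 ((Q (⋂ n : ℕ, A (βs n))).toReal)) := by
            have h3 := (ENNReal.tendsto_toReal (measure_ne_top Q _)).comp h1
            simpa [Function.comp_def] using h3
          have h3 : ∀ n, x ≤ g (βs n) := by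
            intro n
            by_contra hcon
            push_neg at hcon
            exact notMem_of_lt_csInf (hβlt n) hSbdd ⟨hβ0 n, hcon.le⟩
          have h4 : x ≤ (Q (⋂ n : ℕ, A (βs n))).toReal :=
            ge_of_tendsto h2 (Eventually.of_forall h3)
          exact le_trans h4 (ENNReal.toReal_mono (measure_ne_top _ _) (measure_mono hsub))
      set B := C \ A α with hBdef
      have hBm : MeasurableSet B := hCm.diff (hAm α)
      have hAsubC : A α ⊆ C := by
        intro ω hω
        show α * q ω ≤ p ω
        exact le_of_lt hω
      set a := (Q (A α)).toReal with hadef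
      set b := (Q B).toReal with hbdef
      set c := (Q C).toReal with hcdef
      have hc : c = a + b := by
        have h1 : Q C = Q (A α) + Q B := by
          rw [show C = A α ∪ B from (Set.union_diff_cancel hAsubC).symm]
          exact measure_union disjoint_sdiff_self_right hBm
        rw [hcdef, h1, ENNReal.toReal_add (measure_ne_top _ _) (measure_ne_top _ _)]
      have hb0 : 0 ≤ b := ENNReal.toReal_nonneg
      have haux : ∃ γ : ℝ, 0 ≤ γ ∧ γ ≤ 1 ∧ a + γ * b = x := by
        by_cases hb : b = 0
        · refine ⟨0, le_rfl, zero_le_one, ?_⟩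
          rw [hb]
          have := hgα
          have := hcle
          rw [hc, hb] at hcle
          simp only [mul_zero, add_zero]
          linarith [hgα]
        · have hbpos : 0 < b := lt_of_le_of_ne hb0 (Ne.symm hb)
          refine ⟨(x - a)/b, div_nonneg (by linarith [hgα]) hb0, ?_, ?_⟩
          · rw [div_le_one hbpos]; linarith [hcle, hc]
          · rw [div_mul_cancel₀ _ hb]; ring
      obtain ⟨γ, hγ0, hγ1, hγx⟩ := haux
      set φ : Ω → ℝ := fun ω => (A α).indicator (fun _ => (1:ℝ)) ω
        + γ * B.indicator (fun _ => (1:ℝ)) ω with hφdef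
      have hφm : Measurable φ :=
        (measurable_const.indicator (hAm α)).add
          ((measurable_const.indicator hBm).const_mul γ)
      have hφ01 : ∀ ω, φ ω ∈ Set.Icc (0:ℝ) 1 := by
        intro ω
        by_cases h1 : ω ∈ A α
        · have h2 : ω ∉ B := fun h => h.2 h1
          simp only [hφdef, Set.indicator_of_mem h1, Set.indicator_of_notMem h2]
          norm_num
        · by_cases h2 : ω ∈ B
          · simp only [hφdef, Set.indicator_of_notMem h1, Set.indicator_of_mem h2]
            constructor <;> [simpa using hγ0; simpa using hγ1]
          · simp only [hφdef, Set.indicator_of_notMem h1, Set.indicator_of_notMem h2]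
            norm_num
      have hiA : Integrable ((A α).indicator (fun _ => (1:ℝ))) Q :=
        (integrable_const 1).indicator (hAm α)
      have hiB : Integrable (B.indicator (fun _ => (1:ℝ))) Q :=
        (integrable_const 1).indicator hBm
      have hiA' : Integrable ((A α).indicator (fun _ => (1:ℝ))) P :=
        (integrable_const 1).indicator (hAm α)
      have hiB' : Integrable (B.indicator (fun _ => (1:ℝ))) P :=
        (integrable_const 1).indicator hBm
      have hconstraint : ∫ ω, φ ω ∂Q ≤ x := by
        have : ∫ ω, φ ω ∂Q = a + γ * b := by
          rw [hφdef]
          rw [integral_add hiA (hiB.const_mul γ), integral_const_mul,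
            integral_ind Q _ (hAm α), integral_ind Q _ hBm]
        rw [this, hγx]
      have hPB : (P B).toReal = α * (Q B).toReal := by
        rw [← setIntegral_d_P P Q, ← setIntegral_d_Q P Q]
        rw [← integral_const_mul]
        apply setIntegral_congr_fun hBm
        intro ω hω
        have h1 : α * q ω ≤ p ω := hω.1
        have h2 : ¬ (α * q ω < p ω) := hω.2
        push_neg at h2
        exact le_antisymm h2 h1
      have hH : hockeyStick α P Q = (P (A α)).toReal - α * a := hs_eq_set P Q α
      have hvalue : ∫ ω, (1 - φ ω) ∂P = 1 - ((P (A α)).toReal + γ * (P B).toReal) := by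
        rw [integral_sub (integrable_const 1) (test_int P φ hφm hφ01), integral_const]
        have : ∫ ω, φ ω ∂P = (P (A α)).toReal + γ * (P B).toReal := by
          rw [hφdef, integral_add hiA' (hiB'.const_mul γ), integral_const_mul,
            integral_ind P _ (hAm α), integral_ind P _ hBm]
        rw [this]; simp
      have hfinal : ∫ ω, (1 - φ ω) ∂P ≤ t := by
        rw [hvalue]
        have e : 1 - ((P (A α)).toReal + γ * (P B).toReal)
            = 1 - α * x - hockeyStick α P Q := by
          rw [hH, hPB, ← hγx, ← hbdef]; ring
        rw [e]
        exact ht α hα0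
      exact le_trans (tradeOff_le Q P x φ hφm hφ01 hconstraint) hfinal

lemma flip_imp {Ω' : Type*} [MeasurableSpace Ω'] (μ ν : Measure Ω)
    [IsProbabilityMeasure μ] [IsProbabilityMeasure ν]
    (P Q : Measure Ω') [IsProbabilityMeasure P] [IsProbabilityMeasure Q]
    (h : ∀ α : ℝ, 0 ≤ α → hockeyStick α μ ν ≤ hockeyStick α P Q) :
    ∀ α : ℝ, 0 ≤ α → hockeyStick α ν μ ≤ hockeyStick α Q P := by
  intro α hα
  rcases eq_or_lt_of_le hα with h0 | hpos
  · rw [← h0, hs_zero, hs_zero]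
  · rw [hs_symm ν μ α hpos, hs_symm Q P α hpos]
    have h1 := h (1/α) (by positivity)
    have h2 := mul_le_mul_of_nonneg_left h1 hα
    linarith

end PQ2

end HSDualAux

open HSDualAux

theorem hockeyStick_tradeOff_duality
    {Ω Ω' : Type*} [MeasurableSpace Ω] [MeasurableSpace Ω']
    (μ ν : Measure Ω) [IsProbabilityMeasure μ] [IsProbabilityMeasure ν]
    (P Q : Measure Ω') [IsProbabilityMeasure P] [IsProbabilityMeasure Q] :
    ((∀ α : ℝ, 0 ≤ α → hockeyStick α μ ν ≤ hockeyStick α P Q)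
      ↔ (∀ α : ℝ, 0 ≤ α → hockeyStick α ν μ ≤ hockeyStick α Q P))
    ∧ ((∀ α : ℝ, 0 ≤ α → hockeyStick α μ ν ≤ hockeyStick α P Q)
      ↔ (∀ x ∈ Set.Icc (0:ℝ) 1, tradeOff P Q x ≤ tradeOff μ ν x)) := by
  have E12 : (∀ α : ℝ, 0 ≤ α → hockeyStick α μ ν ≤ hockeyStick α P Q)
      ↔ (∀ α : ℝ, 0 ≤ α → hockeyStick α ν μ ≤ hockeyStick α Q P) :=
    ⟨flip_imp μ ν P Q, flip_imp ν μ Q P⟩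
  have hard : (∀ α : ℝ, 0 ≤ α → hockeyStick α ν μ ≤ hockeyStick α Q P) →
      ∀ x ∈ Set.Icc (0:ℝ) 1, tradeOff P Q x ≤ tradeOff μ ν x := by
    intro h x hx
    refine np Q P x hx.1 hx.2 _ (tradeOff_nonneg μ ν x) ?_
    intro α hα
    calc 1 - α * x - hockeyStick α Q P ≤ 1 - α * x - hockeyStick α ν μ := by
          have := h α hα; linarith
      _ ≤ tradeOff μ ν x := le_tradeOff ν μ α x hα hx.1
  have easy : (∀ x ∈ Set.Icc (0:ℝ) 1, tradeOff P Q x ≤ tradeOff μ ν x) →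
      ∀ α : ℝ, 0 ≤ α → hockeyStick α ν μ ≤ hockeyStick α Q P := by
    intro h α hα
    have hAm : MeasurableSet {ω | α * d μ (ν + μ) ω < d ν (ν + μ) ω} :=
      measurableSet_lt (measurable_const.mul (d_meas μ (ν + μ))) (d_meas ν (ν + μ))
    have hsum := hs_eq_set ν μ α
    set Aset := {ω | α * d μ (ν + μ) ω < d ν (ν + μ) ω}
    set x₀ := (μ Aset).toReal with hx₀def
    have hx₀ : x₀ ∈ Set.Icc (0:ℝ) 1 := by
      constructor
      · exact ENNReal.toReal_nonneg
      · have := ENNReal.toReal_mono (a := μ Aset) (b := 1) ENNReal.one_ne_top prob_le_one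
        simpa using this
    have h1 : tradeOff μ ν x₀ ≤ 1 - (ν Aset).toReal :=
      tradeOff_le_indicator μ ν Aset hAm x₀ le_rfl
    have h2 : 1 - α * x₀ - hockeyStick α Q P ≤ tradeOff P Q x₀ :=
      le_tradeOff Q P α x₀ hα hx₀.1
    have h3 := h x₀ hx₀
    rw [hsum]
    linarith
  exact ⟨E12, ⟨fun h1 => hard (E12.mp h1), fun h3 => E12.mpr (easy h3)⟩⟩
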